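/- For every integer n ≥ 1 and every nonempty finite set P ⊂ ℝ, one has g_n^M(P) = g_n^P(P). That is, the infimum of the Minkowski dimension over bounded sets B ⊆ ℝ^n that contain a P-pattern with basepoint x for every x ∈ [0,1]^n equals the infimum of the packing dimension over (arbitrary) sets B ⊆ ℝ^n with the same property. -/

import Mathlib

open Set Filter Bornology

/-- Covering number of `E` by open balls of radius `ε`. -/
noncomputable def covNum {X : Type*} [PseudoMetricSpace X] (E : Set X) (ε : ℝ) : ℕ∞ :=
  ⨅ (t : Finset X) (_ : E ⊆ ⋃ x ∈ t, Metric.ball x ε), (t.card : ℕ∞)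

/-- Upper Minkowski (box-counting) dimension. -/
noncomputable def dimM {X : Type*} [PseudoMetricSpace X] (E : Set X) : ℝ :=
  limsup (fun ε : ℝ => Real.log ((covNum E ε).toNat) / Real.log (1 / ε))
    (nhdsWithin 0 (Ioi 0))

/-- Packing dimension, as modified upper box dimension: the infimum of
`⨆ j, dimM (E j)` over countable covers of the set by bounded sets. -/
noncomputable def dimP {X : Type*} [PseudoMetricSpace X] (E : Set X) : ℝ :=
  sInf { a : ℝ | ∃ f : ℕ → Set X, (E ⊆ ⋃ j, f j) ∧ (∀ j, IsBounded (f j)) ∧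
    a = ⨆ j, dimM (f j) }

open Metric

section covNumBasic

variable {X : Type*} [PseudoMetricSpace X] {E F : Set X} {ε δ : ℝ}

noncomputable def boxFun (E : Set X) (ε : ℝ) : ℝ :=
  Real.log ((covNum E ε).toNat) / Real.log (1 / ε)

def Uset (E : Set X) : Set ℝ := {a | ∀ᶠ ε in nhdsWithin (0:ℝ) (Ioi 0), boxFun E ε ≤ a}

lemma dimM_eq_sInf (E : Set X) : dimM E = sInf (Uset E) := Filter.limsup_eq

lemma covNum_le_card {t : Finset X} (h : E ⊆ ⋃ x ∈ t, Metric.ball x ε) :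
    covNum E ε ≤ t.card := iInf₂_le t h

lemma covNum_mono (h : E ⊆ F) : covNum E ε ≤ covNum F ε :=
  le_iInf₂ fun t ht => covNum_le_card (h.trans ht)

lemma covNum_anti (h : δ ≤ ε) : covNum E ε ≤ covNum E δ :=
  le_iInf₂ fun t ht => covNum_le_card
    (ht.trans (Set.iUnion₂_mono fun x _ => Metric.ball_subset_ball h))

lemma covNum_ne_top (hE : TotallyBounded E) (hε : 0 < ε) : covNum E ε ≠ ⊤ := by
  obtain ⟨t, htf, ht⟩ := (Metric.totallyBounded_iff.mp hE) ε hε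
  intro h
  have := covNum_le_card (t := htf.toFinset) (by simpa [Set.Finite.mem_toFinset] using ht)
  rw [h] at this
  exact (ENat.coe_lt_top htf.toFinset.card).not_ge this

lemma exists_cover (h : covNum E ε ≠ ⊤) :
    ∃ t : Finset X, (E ⊆ ⋃ x ∈ t, Metric.ball x ε) ∧ (t.card : ℕ∞) = covNum E ε := by
  have hne : ∃ t : Finset X, E ⊆ ⋃ x ∈ t, Metric.ball x ε := by
    by_contra hc
    push_neg at hc
    apply h
    rw [covNum]
    simp only [iInf_eq_top]
    intro t ht
    exact absurd ht (hc t)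
  set A : Set ℕ := {k | ∃ t : Finset X, (E ⊆ ⋃ x ∈ t, Metric.ball x ε) ∧ t.card = k} with hA
  obtain ⟨t0, ht0⟩ := hne
  have hAne : A.Nonempty := ⟨t0.card, t0, ht0, rfl⟩
  obtain ⟨t, ht, htc⟩ := Nat.sInf_mem hAne
  refine ⟨t, ht, le_antisymm (le_iInf₂ fun s hs => ?_) (covNum_le_card ht)⟩
  rw [htc]
  exact_mod_cast Nat.cast_le.mpr (Nat.sInf_le (show s.card ∈ A from ⟨s, hs, rfl⟩))

lemma covNum_union [DecidableEq X] : covNum (E ∪ F) ε ≤ covNum E ε + covNum F ε := by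
  rcases eq_or_ne (covNum E ε) ⊤ with h | h
  · simp [h]
  rcases eq_or_ne (covNum F ε) ⊤ with h' | h'
  · simp [h']
  obtain ⟨t, ht, htc⟩ := exists_cover h
  obtain ⟨s, hs, hsc⟩ := exists_cover h'
  calc covNum (E ∪ F) ε ≤ ((t ∪ s).card : ℕ∞) := by
        refine covNum_le_card (Set.union_subset (ht.trans ?_) (hs.trans ?_)) <;>
          exact Set.iUnion₂_mono' fun x hx => ⟨x, by simp [hx, Finset.mem_union.mpr], subset_rfl⟩
    _ ≤ (t.card : ℕ∞) + s.card := by exact_mod_cast Nat.cast_le.mpr (Finset.card_union_le t s)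
    _ = covNum E ε + covNum F ε := by rw [htc, hsc]

lemma covNum_closure (hε : 0 < ε) : covNum (closure E) ε ≤ covNum E (ε/2) := by
  refine le_iInf₂ fun t ht => covNum_le_card ?_
  have h1 : closure E ⊆ ⋃ x ∈ t, Metric.closedBall x (ε/2) := by
    refine closure_minimal (ht.trans (Set.iUnion₂_mono fun x _ => Metric.ball_subset_closedBall)) ?_
    exact (t.finite_toSet).isClosed_biUnion fun x _ => Metric.isClosed_closedBall
  exact h1.trans (Set.iUnion₂_mono fun x _ => Metric.closedBall_subset_ball (by linarith))

end covNumBasic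

section dimMBasic

variable {X : Type*} [PseudoMetricSpace X] {E F : Set X} {ε : ℝ}

lemma log_one_div_pos (hε : ε ∈ Ioo (0:ℝ) 1) : 0 < Real.log (1/ε) :=
  Real.log_pos ((one_lt_one_div hε.1 hε.2))

lemma Ioo_mem_nhdsGT01 : Ioo (0:ℝ) 1 ∈ nhdsWithin (0:ℝ) (Ioi 0) :=
  Ioo_mem_nhdsGT_of_mem ⟨le_refl 0, one_pos⟩

lemma boxFun_nonneg (hε : ε ∈ Ioo (0:ℝ) 1) : 0 ≤ boxFun E ε :=
  div_nonneg (Real.log_natCast_nonneg _) (log_one_div_pos hε).le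

lemma mem_Uset {a : ℝ} : a ∈ Uset E ↔ ∀ᶠ ε in nhdsWithin (0:ℝ) (Ioi 0), boxFun E ε ≤ a :=
  Iff.rfl

lemma Uset_nonneg {a : ℝ} (ha : a ∈ Uset E) : 0 ≤ a := by
  have h := (mem_Uset.mp ha).and Ioo_mem_nhdsGT01
  obtain ⟨ε, h1, h2⟩ := h.exists
  exact (boxFun_nonneg h2).trans h1

lemma bddBelow_Uset : BddBelow (Uset E) := ⟨0, fun a ha => Uset_nonneg ha⟩

lemma dimM_nonneg : 0 ≤ dimM E := by
  rw [dimM_eq_sInf]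
  exact Real.sInf_nonneg fun a ha => Uset_nonneg ha

lemma dimM_le_of_forall_mem_Uset {c : ℝ} (hc : 0 ≤ c) (h : ∀ b, c < b → b ∈ Uset E) :
    dimM E ≤ c := by
  rw [dimM_eq_sInf]
  exact le_of_forall_gt_imp_ge_of_dense fun b hb => csInf_le bddBelow_Uset (h b hb)

lemma log_le_of_boxFun_le {a : ℝ} (hε : ε ∈ Ioo (0:ℝ) 1) (h : boxFun E ε ≤ a) :
    Real.log ((covNum E ε).toNat) ≤ a * Real.log (1/ε) :=
  (div_le_iff₀ (log_one_div_pos hε)).mp h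

lemma tendsto_log_one_div :
    Tendsto (fun ε : ℝ => Real.log (1/ε)) (nhdsWithin (0:ℝ) (Ioi 0)) atTop := by
  simp only [one_div]
  exact Real.tendsto_log_atTop.comp tendsto_inv_nhdsGT_zero

end dimMBasic

section dimMComparison

variable {X : Type*} [PseudoMetricSpace X] {E E' F : Set X}

lemma tendsto_const_mul_nhdsGT {c : ℝ} (hc : 0 < c) :
    Tendsto (fun ε : ℝ => c*ε) (nhdsWithin (0:ℝ) (Ioi 0)) (nhdsWithin (0:ℝ) (Ioi 0)) := by
  rw [tendsto_nhdsWithin_iff]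
  constructor
  · have h : Tendsto (fun ε : ℝ => c*ε) (nhds (0:ℝ)) (nhds (c*0)) :=
      (continuous_const.mul continuous_id).tendsto (0:ℝ)
    rw [mul_zero] at h
    exact h.mono_left nhdsWithin_le_nhds
  · filter_upwards [self_mem_nhdsWithin] with ε (hε : 0 < ε)
    exact mul_pos hc hε

lemma eventually_mem_Ioo :
    ∀ᶠ ε in nhdsWithin (0:ℝ) (Ioi 0), ε ∈ Ioo (0:ℝ) 1 :=
  Filter.eventually_iff.mpr Ioo_mem_nhdsGT01

lemma dimM_le_dimM (K : ℕ) (hK : 1 ≤ K) {c : ℝ} (hc : 0 < c)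
    (hUE : (Uset E).Nonempty)
    (hcov : ∀ᶠ ε in nhdsWithin (0:ℝ) (Ioi 0),
      (covNum E' ε).toNat ≤ K * (covNum E (c*ε)).toNat) :
    dimM E' ≤ dimM E := by
  refine dimM_le_of_forall_mem_Uset dimM_nonneg fun b hb => ?_
  obtain ⟨a, haU, hab⟩ := exists_lt_of_csInf_lt hUE ((dimM_eq_sInf E) ▸ hb)
  have ha0 : 0 ≤ a := Uset_nonneg haU
  have htend := tendsto_const_mul_nhdsGT hc
  have h2 : ∀ᶠ ε in nhdsWithin (0:ℝ) (Ioi 0), boxFun E (c*ε) ≤ a :=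
    htend.eventually (mem_Uset.mp haU)
  have h2' : ∀ᶠ ε in nhdsWithin (0:ℝ) (Ioi 0), c*ε ∈ Ioo (0:ℝ) 1 :=
    htend.eventually eventually_mem_Ioo
  have h4 : ∀ᶠ ε in nhdsWithin (0:ℝ) (Ioi 0),
      Real.log K + a * Real.log (1/c) ≤ (b - a) * Real.log (1/ε) :=
    (tendsto_log_one_div.const_mul_atTop (by linarith : (0:ℝ) < b - a)).eventually_ge_atTop _
  rw [mem_Uset]
  filter_upwards [eventually_mem_Ioo, h2, h2', hcov, h4] with ε hε1 hε2 hε2' hε3 hε4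
  rw [boxFun, div_le_iff₀ (log_one_div_pos hε1)]
  set m := (covNum E (c*ε)).toNat with hm
  set m' := (covNum E' ε).toNat with hm'
  have hlogpos := log_one_div_pos hε1
  rcases Nat.eq_zero_or_pos m with h0 | hmpos
  · have hz : m' = 0 := Nat.le_zero.mp (by simpa [h0] using hε3)
    rw [hz]
    simp only [Nat.cast_zero, Real.log_zero]
    exact mul_nonneg (by linarith) hlogpos.le
  · have hlm' : Real.log m' ≤ Real.log K + Real.log m := by
      rcases Nat.eq_zero_or_pos m' with h0' | hm'pos
      · rw [h0']
        simp only [Nat.cast_zero, Real.log_zero]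
        have := Real.log_natCast_nonneg K
        have := Real.log_natCast_nonneg m
        linarith
      · calc Real.log m' ≤ Real.log (K * m : ℕ) := by
              refine Real.log_le_log (by exact_mod_cast hm'pos) ?_
              exact_mod_cast hε3
          _ = Real.log K + Real.log m := by
              push_cast
              rw [Real.log_mul (Nat.cast_ne_zero.mpr (by omega)) (by exact_mod_cast hmpos.ne')]
    have hlm : Real.log m ≤ a * Real.log (1/(c*ε)) := log_le_of_boxFun_le hε2' hε2
    have hsplit : Real.log (1/(c*ε)) = Real.log (1/c) + Real.log (1/ε) := by
      rw [show (1:ℝ)/(c*ε) = (1/c) * (1/ε) by field_simp]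
      exact Real.log_mul (one_div_ne_zero hc.ne') (one_div_ne_zero hε1.1.ne')
    rw [hsplit] at hlm
    nlinarith [hε4, hlm', hlm]

lemma dimM_union_le [DecidableEq X] (hE : TotallyBounded E) (hF : TotallyBounded F)
    (hUE : (Uset E).Nonempty) (hUF : (Uset F).Nonempty) :
    dimM (E ∪ F) ≤ max (dimM E) (dimM F) := by
  refine dimM_le_of_forall_mem_Uset (le_max_of_le_left dimM_nonneg) fun b hb => ?_
  obtain ⟨a₁, ha₁U, ha₁⟩ := exists_lt_of_csInf_lt hUE
    ((dimM_eq_sInf E) ▸ (lt_of_le_of_lt (le_max_left _ _) hb))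
  obtain ⟨a₂, ha₂U, ha₂⟩ := exists_lt_of_csInf_lt hUF
    ((dimM_eq_sInf F) ▸ (lt_of_le_of_lt (le_max_right _ _) hb))
  set a := max a₁ a₂ with hadef
  have hab : a < b := max_lt ha₁ ha₂
  have ha0 : 0 ≤ a := le_max_of_le_left (Uset_nonneg ha₁U)
  have h4 : ∀ᶠ ε in nhdsWithin (0:ℝ) (Ioi 0),
      Real.log 2 ≤ (b - a) * Real.log (1/ε) :=
    (tendsto_log_one_div.const_mul_atTop (by linarith : (0:ℝ) < b - a)).eventually_ge_atTop _
  rw [mem_Uset]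
  filter_upwards [eventually_mem_Ioo, mem_Uset.mp ha₁U, mem_Uset.mp ha₂U, h4]
    with ε hε1 hev1 hev2 hε4
  rw [boxFun, div_le_iff₀ (log_one_div_pos hε1)]
  have hlogpos := log_one_div_pos hε1
  set mE := (covNum E ε).toNat with hmE
  set mF := (covNum F ε).toNat with hmF
  have hEne := covNum_ne_top hE hε1.1
  have hFne := covNum_ne_top hF hε1.1
  have hsum : (covNum (E ∪ F) ε).toNat ≤ mE + mF := by
    have h := ENat.toNat_le_toNat (covNum_union (E := E) (F := F) (ε := ε))
      (WithTop.add_ne_top.mpr ⟨hEne, hFne⟩)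
    rwa [ENat.toNat_add hEne hFne] at h
  set m := (covNum (E ∪ F) ε).toNat with hm
  set M := max mE mF with hM
  rcases Nat.eq_zero_or_pos M with h0 | hMpos
  · have hz : m = 0 := by omega
    rw [hz]
    simp only [Nat.cast_zero, Real.log_zero]
    exact mul_nonneg (by linarith) hlogpos.le
  · have hlogM : Real.log M ≤ a * Real.log (1/ε) := by
      rcases max_choice mE mF with hc | hc <;> rw [hM, hc]
      · exact le_trans (log_le_of_boxFun_le hε1 hev1)
          (mul_le_mul_of_nonneg_right (le_max_left _ _) hlogpos.le)
      · exact le_trans (log_le_of_boxFun_le hε1 hev2)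
          (mul_le_mul_of_nonneg_right (le_max_right _ _) hlogpos.le)
    have hlm : Real.log m ≤ Real.log 2 + Real.log M := by
      rcases Nat.eq_zero_or_pos m with h0' | hm'pos
      · rw [h0']
        simp only [Nat.cast_zero, Real.log_zero]
        have h2 : (0:ℝ) ≤ Real.log 2 := Real.log_nonneg one_le_two
        have := Real.log_natCast_nonneg M
        linarith
      · calc Real.log m ≤ Real.log (2 * M : ℕ) := by
              refine Real.log_le_log (by exact_mod_cast hm'pos) ?_
              exact_mod_cast by omega
          _ = Real.log 2 + Real.log M := by
              push_cast
              rw [Real.log_mul (by norm_num) (by exact_mod_cast hMpos.ne')]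
    linarith

end dimMComparison

section Euclid

variable {n : ℕ}

local notation "X" => EuclideanSpace ℝ (Fin n)

lemma euclid_abs_coord_le (x : X) (i : Fin n) : |x i| ≤ ‖x‖ := by
  rw [EuclideanSpace.norm_eq]
  have h1 : |x i| = Real.sqrt (|x i|^2) := (Real.sqrt_sq (abs_nonneg _)).symm
  rw [h1]
  refine Real.sqrt_le_sqrt ?_
  have := Finset.single_le_sum (f := fun j => ‖x j‖^2) (fun j _ => by positivity)
    (Finset.mem_univ i)
  simpa [Real.norm_eq_abs] using this

lemma euclid_dist_le {x y : X} {c : ℝ} (hc : 0 ≤ c) (h : ∀ i, |x i - y i| ≤ c) :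
    dist x y ≤ Real.sqrt n * c := by
  rw [EuclideanSpace.dist_eq]
  have h1 : ∑ i, dist (x i) (y i)^2 ≤ (n : ℝ) * c^2 := by
    calc ∑ i, dist (x i) (y i)^2 ≤ ∑ _i : Fin n, c^2 := by
          refine Finset.sum_le_sum fun i _ => ?_
          rw [Real.dist_eq]
          exact pow_le_pow_left₀ (abs_nonneg _) (h i) 2
      _ = (n : ℝ) * c^2 := by simp [mul_comm]
  calc Real.sqrt (∑ i, dist (x i) (y i)^2) ≤ Real.sqrt ((n:ℝ) * c^2) := Real.sqrt_le_sqrt h1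
    _ = Real.sqrt n * c := by
        rw [Real.sqrt_mul (Nat.cast_nonneg n), Real.sqrt_sq hc]

lemma isBounded_totallyBounded {E : Set X} (hE : IsBounded E) : TotallyBounded E := by
  obtain ⟨r, hr⟩ := hE.subset_closedBall 0
  exact (isCompact_closedBall (0:X) r).totallyBounded.subset hr

lemma covNum_grid (hn : 1 ≤ n) {E : Set X} {R : ℝ} (hR : 1 ≤ R)
    (hE : E ⊆ Metric.closedBall 0 R) {ε : ℝ} (hε : ε ∈ Ioo (0:ℝ) 1) :
    ((covNum E ε).toNat : ℝ) ≤ ((4*R*Real.sqrt n + 2)/ε)^n := by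
  have hsqn : 1 ≤ Real.sqrt n := by
    rw [show (1:ℝ) = Real.sqrt 1 by simp]
    exact Real.sqrt_le_sqrt (by exact_mod_cast hn)
  have hsqn0 : 0 < Real.sqrt n := by linarith
  set δ : ℝ := ε/(2*Real.sqrt n) with hδ
  have hδ0 : 0 < δ := div_pos hε.1 (by positivity)
  set m : ℕ := ⌈2*R/δ⌉₊ + 1 with hm
  set s : Finset ℝ := (Finset.range m).image (fun k : ℕ => -R + (k:ℝ)*δ + δ/2) with hs
  classical
  set t : Finset X :=
    (Fintype.piFinset fun _ : Fin n => s).image (WithLp.equiv 2 (Fin n → ℝ)).symm with ht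
  have hcov : E ⊆ ⋃ z ∈ t, Metric.ball z ε := by
    intro x hx
    have hxR : ∀ i, |x i| ≤ R := by
      intro i
      refine (euclid_abs_coord_le x i).trans ?_
      have := Metric.mem_closedBall.mp (hE hx)
      simpa [dist_zero_right] using this
    set g : Fin n → ℝ := fun i => -R + (⌊(x i + R)/δ⌋₊ : ℝ)*δ + δ/2 with hg
    have hgs : ∀ i, g i ∈ s := by
      intro i
      refine Finset.mem_image.mpr ⟨⌊(x i + R)/δ⌋₊, Finset.mem_range.mpr ?_, rfl⟩
      have h1 : ⌊(x i + R)/δ⌋₊ ≤ ⌈2*R/δ⌉₊ := by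
        refine le_trans (Nat.floor_mono ?_) (Nat.floor_le_ceil _)
        have h2 : x i + R ≤ 2*R := by have := (abs_le.mp (hxR i)).2; linarith
        gcongr
      omega
    have hdist : ∀ i, |x i - g i| ≤ δ/2 := by
      intro i
      have h0 : 0 ≤ x i + R := by have := (abs_le.mp (hxR i)).1; linarith
      have hfl : (⌊(x i + R)/δ⌋₊ : ℝ) * δ ≤ x i + R := by
        have := Nat.floor_le (div_nonneg h0 hδ0.le)
        calc (⌊(x i + R)/δ⌋₊ : ℝ) * δ ≤ ((x i + R)/δ) * δ := by gcongr
          _ = x i + R := by field_simp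
      have hfl2 : x i + R < ((⌊(x i + R)/δ⌋₊ : ℝ) + 1) * δ := by
        have := Nat.lt_floor_add_one ((x i + R)/δ)
        calc x i + R = ((x i + R)/δ) * δ := by field_simp
          _ < ((⌊(x i + R)/δ⌋₊ : ℝ) + 1) * δ := by gcongr
      rw [hg, abs_le]
      constructor <;> simp only <;> nlinarith
    refine Set.mem_iUnion₂.mpr ⟨(WithLp.equiv 2 (Fin n → ℝ)).symm g, ?_, ?_⟩
    · exact Finset.mem_image.mpr ⟨g, Fintype.mem_piFinset.mpr fun i => hgs i, rfl⟩
    · rw [Metric.mem_ball]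
      have : dist x ((WithLp.equiv 2 (Fin n → ℝ)).symm g) ≤ Real.sqrt n * (δ/2) := by
        refine euclid_dist_le (by positivity) fun i => ?_
        exact hdist i
      calc dist x ((WithLp.equiv 2 (Fin n → ℝ)).symm g) ≤ Real.sqrt n * (δ/2) := this
        _ = ε/4 := by rw [hδ]; field_simp; ring
        _ < ε := by linarith [hε.1]
  have hcard : t.card ≤ m^n := by
    calc t.card ≤ (Fintype.piFinset fun _ : Fin n => s).card := Finset.card_image_le
      _ = ∏ _i : Fin n, s.card := Fintype.card_piFinset _
      _ ≤ ∏ _i : Fin n, m := Finset.prod_le_prod (fun _ _ => Nat.zero_le _)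
          (fun _ _ => (Finset.card_image_le).trans (by simp))
      _ = m^n := by simp
  have h1 : (covNum E ε).toNat ≤ m^n := by
    have h2 := ENat.toNat_le_toNat (covNum_le_card hcov) (by simp)
    simpa using h2.trans hcard
  calc ((covNum E ε).toNat : ℝ) ≤ (m^n : ℕ) := by exact_mod_cast h1
    _ = (m : ℝ)^n := by push_cast; ring
    _ ≤ ((4*R*Real.sqrt n + 2)/ε)^n := by
        refine pow_le_pow_left₀ (Nat.cast_nonneg m) ?_ n
        have hceil : (⌈2*R/δ⌉₊ : ℝ) < 2*R/δ + 1 := Nat.ceil_lt_add_one (by positivity)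
        have hmr : (m:ℝ) < 2*R/δ + 2 := by push_cast [hm]; linarith
        have hδval : 2*R/δ = 4*R*Real.sqrt n/ε := by rw [hδ]; field_simp; ring
        rw [hδval] at hmr
        have hε1 : ε ≤ 1 := hε.2.le
        have hε0 : 0 < ε := hε.1
        rw [div_add' _ _ _ hε0.ne'] at hmr
        calc (m:ℝ) ≤ (4*R*Real.sqrt n + 2*ε)/ε := hmr.le
          _ ≤ (4*R*Real.sqrt n + 2)/ε := by
              have h5 : 4*R*Real.sqrt n + 2*ε ≤ 4*R*Real.sqrt n + 2 := by nlinarith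
              exact (div_le_div_iff_of_pos_right hε0).mpr h5

lemma Uset_witness (hn : 1 ≤ n) {E : Set X} (hE : IsBounded E) {b : ℝ} (hb : (n:ℝ) < b) :
    b ∈ Uset E := by
  obtain ⟨r, hr⟩ := hE.subset_closedBall 0
  set R := max r 1 with hR
  have hR1 : 1 ≤ R := le_max_right _ _
  have hER : E ⊆ Metric.closedBall 0 R :=
    hr.trans (Metric.closedBall_subset_closedBall (le_max_left _ _))
  set C : ℝ := 4*R*Real.sqrt n + 2 with hC
  have hC1 : 1 ≤ C := by
    have : (0:ℝ) ≤ 4*R*Real.sqrt n := by positivity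
    linarith
  have h4 : ∀ᶠ ε in nhdsWithin (0:ℝ) (Ioi 0),
      (n:ℝ) * Real.log C ≤ (b - n) * Real.log (1/ε) :=
    (tendsto_log_one_div.const_mul_atTop (by linarith : (0:ℝ) < b - n)).eventually_ge_atTop _
  rw [mem_Uset]
  filter_upwards [eventually_mem_Ioo, h4] with ε hε1 hε4
  rw [boxFun, div_le_iff₀ (log_one_div_pos hε1)]
  have hlogpos := log_one_div_pos hε1
  set m' := (covNum E ε).toNat with hm'
  rcases Nat.eq_zero_or_pos m' with h0 | hmpos
  · rw [h0]
    simp only [Nat.cast_zero, Real.log_zero]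
    have : (0:ℝ) ≤ n := Nat.cast_nonneg n
    nlinarith
  · have hgrid := covNum_grid hn hR1 hER hε1
    have hlog : Real.log m' ≤ (n:ℝ) * (Real.log C + Real.log (1/ε)) := by
      calc Real.log m' ≤ Real.log ((C/ε)^n) :=
            Real.log_le_log (by exact_mod_cast hmpos) hgrid
        _ = (n:ℝ) * Real.log (C/ε) := Real.log_pow _ n
        _ = (n:ℝ) * (Real.log C + Real.log (1/ε)) := by
            rw [show C/ε = C * (1/ε) by ring,
              Real.log_mul (by linarith) (one_div_ne_zero hε1.1.ne')]
    nlinarith [hε4, hlog]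

lemma Uset_nonempty (hn : 1 ≤ n) {E : Set X} (hE : IsBounded E) : (Uset E).Nonempty :=
  ⟨(n:ℝ)+1, Uset_witness hn hE (by linarith)⟩

lemma dimM_le_n (hn : 1 ≤ n) {E : Set X} (hE : IsBounded E) : dimM E ≤ (n:ℝ) :=
  dimM_le_of_forall_mem_Uset (Nat.cast_nonneg n) fun b hb => Uset_witness hn hE hb

end Euclid

section MoreLemmas

variable {n : ℕ}

local notation "X" => EuclideanSpace ℝ (Fin n)

lemma isClosed_patternSet (P : Finset ℝ) {G : Set X} (hG : IsClosed G) (M : ℝ) :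
    IsClosed {x : X | ∃ r : X, ‖r‖ ≤ M ∧ ∀ p ∈ P, x + p • r ∈ G} := by
  refine IsSeqClosed.isClosed ?_
  intro x x₀ hx hlim
  choose r hrM hrG using hx
  obtain ⟨r₀, hr₀, φ, hφ, hrlim⟩ := (isCompact_closedBall (0:X) M).tendsto_subseq
    (x := r) (fun j => Metric.mem_closedBall.mpr (by simpa [dist_zero_right] using hrM j))
  refine ⟨r₀, by simpa [dist_zero_right] using Metric.mem_closedBall.mp hr₀, fun p hp => ?_⟩
  have htend : Tendsto (fun j => x (φ j) + p • r (φ j)) atTop (nhds (x₀ + p • r₀)) :=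
    (hlim.comp hφ.tendsto_atTop).add (hrlim.const_smul p)
  exact hG.mem_of_tendsto htend (Filter.Eventually.of_forall fun j => hrG (φ j) p hp)

lemma covNum_affine_le {Y : Type*} [NormedAddCommGroup Y] [NormedSpace ℝ Y]
    {G : Set Y} {l ε : ℝ} (hl : 0 < l) (q0 : Y) :
    covNum ((fun y => (1/l) • (y - q0)) '' G) ε ≤ covNum G (l*ε) := by
  classical
  refine le_iInf₂ fun t ht => ?_
  refine le_trans (covNum_le_card (t := t.image (fun y => (1/l) • (y - q0))) ?_)
    (by exact_mod_cast Nat.cast_le.mpr Finset.card_image_le)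
  rintro _ ⟨y, hy, rfl⟩
  obtain ⟨z, hz, hyz⟩ := Set.mem_iUnion₂.mp (ht hy)
  refine Set.mem_iUnion₂.mpr ⟨(1/l) • (z - q0), Finset.mem_image_of_mem _ hz, ?_⟩
  rw [Metric.mem_ball] at hyz ⊢
  rw [dist_smul₀, dist_sub_right]
  calc ‖(1:ℝ)/l‖ * dist y z < ‖(1:ℝ)/l‖ * (l*ε) := by
        refine mul_lt_mul_of_pos_left hyz ?_
        rw [Real.norm_eq_abs, abs_of_pos (by positivity)]
        positivity
    _ = ε := by
        rw [Real.norm_eq_abs, abs_of_pos (by positivity)]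
        field_simp

lemma dimP_nonneg {B : Set X} : 0 ≤ dimP B := by
  rw [dimP]
  refine Real.sInf_nonneg fun a ha => ?_
  obtain ⟨f, _, _, rfl⟩ := ha
  exact Real.iSup_nonneg fun j => dimM_nonneg

lemma dimP_le_dimM (hn : 1 ≤ n) {B : Set X} (hB : IsBounded B) : dimP B ≤ dimM B := by
  refine csInf_le ⟨0, fun a ha => ?_⟩ ⟨fun _ => B, fun x hx => Set.mem_iUnion.mpr ⟨0, hx⟩, fun _ => hB, ciSup_const.symm⟩
  obtain ⟨f, _, _, rfl⟩ := ha
  exact Real.iSup_nonneg fun j => dimM_nonneg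

lemma dimP_set_nonempty {B : Set X} :
    { a : ℝ | ∃ f : ℕ → Set X, (B ⊆ ⋃ j, f j) ∧ (∀ j, IsBounded (f j)) ∧
      a = ⨆ j, dimM (f j) }.Nonempty := by
  refine ⟨_, fun j => B ∩ Metric.closedBall 0 j, fun x hx => ?_, fun j =>
    (Metric.isBounded_closedBall).subset Set.inter_subset_right, rfl⟩
  exact Set.mem_iUnion.mpr ⟨⌈‖x‖⌉₊, hx, Metric.mem_closedBall.mpr
    (by simpa [dist_zero_right] using Nat.le_ceil ‖x‖)⟩

end MoreLemmas

section MoreLemmas2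

variable {n : ℕ}

local notation "X" => EuclideanSpace ℝ (Fin n)

lemma dimM_closure_le (hn : 1 ≤ n) {A : Set X} (hA : IsBounded A) :
    dimM (closure A) ≤ dimM A := by
  refine dimM_le_dimM 1 le_rfl one_half_pos (Uset_nonempty hn hA) ?_
  filter_upwards [self_mem_nhdsWithin] with ε (hε : ε ∈ Ioi 0)
  rw [Set.mem_Ioi] at hε
  have h := covNum_closure (E := A) hε
  have hne := covNum_ne_top (isBounded_totallyBounded hA) (by positivity : (0:ℝ) < ε/2)
  rw [one_mul, show (1/2)*ε = ε/2 by ring]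
  exact ENat.toNat_le_toNat h hne

lemma accumulate_nat_zero {β : Type*} (f : ℕ → Set β) : Set.accumulate f 0 = f 0 := by
  ext z
  simp [Set.mem_accumulate, Nat.le_zero]

lemma accumulate_nat_succ {β : Type*} (f : ℕ → Set β) (k : ℕ) :
    Set.accumulate f (k+1) = Set.accumulate f k ∪ f (k+1) := by
  ext z
  simp only [Set.mem_accumulate, Set.mem_union, Nat.le_add_one_iff]
  constructor
  · rintro ⟨y, hy | rfl, hz⟩
    · exact Or.inl ⟨y, hy, hz⟩
    · exact Or.inr hz
  · rintro (⟨y, hy, hz⟩ | hz)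
    · exact ⟨y, Or.inl hy, hz⟩
    · exact ⟨k+1, Or.inr rfl, hz⟩

lemma isBounded_accumulate {f : ℕ → Set X} (hfb : ∀ j, IsBounded (f j)) (k : ℕ) :
    IsBounded (Set.accumulate f k) := by
  induction k with
  | zero => simpa [accumulate_nat_zero] using hfb 0
  | succ k ih => rw [accumulate_nat_succ]; exact ih.union (hfb (k+1))

lemma dimM_accumulate_le (hn : 1 ≤ n) {f : ℕ → Set X} (hfb : ∀ j, IsBounded (f j))
    {s : ℝ} (hs : ∀ j, dimM (f j) ≤ s) (k : ℕ) : dimM (Set.accumulate f k) ≤ s := by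
  classical
  induction k with
  | zero => simpa [accumulate_nat_zero] using hs 0
  | succ k ih =>
      rw [accumulate_nat_succ]
      refine le_trans (dimM_union_le (isBounded_totallyBounded (isBounded_accumulate hfb k))
        (isBounded_totallyBounded (hfb (k+1)))
        (Uset_nonempty hn (isBounded_accumulate hfb k)) (Uset_nonempty hn (hfb (k+1))))
        (max_le ih (hs (k+1)))

end MoreLemmas2

set_option maxHeartbeats 2000000 in
theorem stmt7 (n : ℕ) (hn : 1 ≤ n) (P : Finset ℝ) (hP : P.Nonempty) :
    sInf { a : ℝ | ∃ B : Set (EuclideanSpace ℝ (Fin n)), IsBounded B ∧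
        (∀ x : EuclideanSpace ℝ (Fin n), (∀ i, x i ∈ Icc (0 : ℝ) 1) →
          ∃ r : EuclideanSpace ℝ (Fin n), ∀ p ∈ P, x + p • r ∈ B) ∧
        a = dimM B } =
    sInf { a : ℝ | ∃ B : Set (EuclideanSpace ℝ (Fin n)),
        (∀ x : EuclideanSpace ℝ (Fin n), (∀ i, x i ∈ Icc (0 : ℝ) 1) →
          ∃ r : EuclideanSpace ℝ (Fin n), ∀ p ∈ P, x + p • r ∈ B) ∧
        a = dimP B } := by
  classical
  set Y := EuclideanSpace ℝ (Fin n)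
  set SM := { a : ℝ | ∃ B : Set Y, IsBounded B ∧
      (∀ x : Y, (∀ i, x i ∈ Icc (0 : ℝ) 1) → ∃ r : Y, ∀ p ∈ P, x + p • r ∈ B) ∧
      a = dimM B } with hSM
  set SP := { a : ℝ | ∃ B : Set Y,
      (∀ x : Y, (∀ i, x i ∈ Icc (0 : ℝ) 1) → ∃ r : Y, ∀ p ∈ P, x + p • r ∈ B) ∧
      a = dimP B } with hSP
  set C : Set Y := {x | ∀ i, x i ∈ Icc (0 : ℝ) 1} with hC
  have hsqn0 : (0:ℝ) < Real.sqrt n := Real.sqrt_pos.mpr (by exact_mod_cast hn)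
  have hCb : IsBounded C := by
    refine (Metric.isBounded_closedBall (x := (0:Y)) (r := Real.sqrt n * 1)).subset ?_
    intro x hx
    rw [Metric.mem_closedBall, dist_comm, dist_comm (0:Y) x] at *
    have : dist x 0 ≤ Real.sqrt n * 1 := by
      refine euclid_dist_le zero_le_one fun i => ?_
      have h0 : (0:Y) i = 0 := rfl
      rw [h0, sub_zero, abs_le]
      exact ⟨by linarith [(hx i).1], (hx i).2⟩
    simpa [dist_comm] using this
  have hCprop : ∀ x : Y, (∀ i, x i ∈ Icc (0 : ℝ) 1) → ∃ r : Y, ∀ p ∈ P, x + p • r ∈ C :=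
    fun x hx => ⟨0, fun p _ => by simp only [smul_zero, add_zero]; exact hx⟩
  have hSMne : SM.Nonempty := ⟨dimM C, C, hCb, hCprop, rfl⟩
  have hSPne : SP.Nonempty := ⟨dimP C, C, hCprop, rfl⟩
  have hSMbdd : BddBelow SM := by
    refine ⟨0, fun a ha => ?_⟩
    obtain ⟨B, _, _, rfl⟩ := ha
    exact dimM_nonneg
  have hSPbdd : BddBelow SP := by
    refine ⟨0, fun a ha => ?_⟩
    obtain ⟨B, _, rfl⟩ := ha
    exact dimP_nonneg
  refine le_antisymm ?_ ?_
  · -- hard direction : sInf SM ≤ sInf SP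
    refine le_csInf hSPne ?_
    rintro a ⟨B, hBp, rfl⟩
    refine le_of_forall_gt_imp_ge_of_dense fun u hu => ?_
    rw [dimP] at hu
    obtain ⟨a', ha'mem, ha'lt⟩ := exists_lt_of_csInf_lt dimP_set_nonempty hu
    obtain ⟨f, hfcov, hfb, rfl⟩ := ha'mem
    have hbddrange : BddAbove (Set.range fun j => dimM (f j)) := by
      refine ⟨(n:ℝ), ?_⟩
      rintro y ⟨j, rfl⟩
      exact dimM_le_n hn (hfb j)
    have hrange : ∀ j, dimM (f j) ≤ ⨆ j, dimM (f j) := fun j => le_ciSup hbddrange j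
    set G : ℕ → Set Y := fun k => closure (Set.accumulate f k) with hG
    have hGb : ∀ k, IsBounded (G k) := fun k => (isBounded_accumulate hfb k).closure
    have hGdim : ∀ k, dimM (G k) ≤ ⨆ j, dimM (f j) := fun k =>
      (dimM_closure_le hn (isBounded_accumulate hfb k)).trans
        (dimM_accumulate_le hn hfb hrange k)
    set E : ℕ × ℕ → Set Y := fun km =>
      {x : Y | ∃ r : Y, ‖r‖ ≤ (km.2:ℝ)+1 ∧ ∀ p ∈ P, x + p • r ∈ G km.1} with hE
    have hEclosed : ∀ km, IsClosed (E km) := fun km =>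
      isClosed_patternSet P isClosed_closure _
    have hCcover : ∀ x ∈ C, ∃ km, x ∈ E km := by
      intro x hx
      obtain ⟨r, hr⟩ := hBp x hx
      have hj : ∀ p : {p // p ∈ P}, ∃ j, x + (p:ℝ) • r ∈ f j :=
        fun p => Set.mem_iUnion.mp (hfcov (hr p p.2))
      choose jf hjf using hj
      refine ⟨(Finset.univ.sup jf, ⌈‖r‖⌉₊), r, ?_, fun p hp => ?_⟩
      · refine (Nat.le_ceil ‖r‖).trans ?_
        push_cast
        linarith
      · refine subset_closure ?_
        refine Set.monotone_accumulate (Finset.le_sup (Finset.mem_univ ⟨p, hp⟩)) ?_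
        exact Set.subset_accumulate (hjf ⟨p, hp⟩)
    -- Baire category in the cube
    have hCclosed : IsClosed C := by
      have : C = ⋂ i, (fun x : Y => x i) ⁻¹' (Icc (0:ℝ) 1) := by
        ext x
        simp [hC, Set.mem_iInter]
      rw [this]
      refine isClosed_iInter fun i => IsClosed.preimage ?_ isClosed_Icc
      exact (continuous_apply i).comp (PiLp.continuous_ofLp 2 (fun _ : Fin n => ℝ))
    haveI : CompleteSpace ↥C := hCclosed.completeSpace_coe
    haveI : Nonempty ↥C := ⟨⟨0, fun i => by norm_num [show (0:Y) i = 0 from rfl]⟩⟩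
    have huniv : ⋃ km : ℕ × ℕ, ((Subtype.val : ↥C → Y) ⁻¹' E km) = Set.univ := by
      rw [Set.eq_univ_iff_forall]
      rintro ⟨x, hx⟩
      obtain ⟨km, hkm⟩ := hCcover x hx
      exact Set.mem_iUnion.mpr ⟨km, hkm⟩
    obtain ⟨km, hint⟩ := nonempty_interior_of_iUnion_of_closed
      (f := fun km : ℕ × ℕ => (Subtype.val : ↥C → Y) ⁻¹' E km)
      (fun km => (hEclosed km).preimage continuous_subtype_val) huniv
    obtain ⟨x₀, hx₀⟩ := hint
    rw [mem_interior_iff_mem_nhds, Metric.mem_nhds_iff] at hx₀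
    obtain ⟨ρ, hρ, hball⟩ := hx₀
    -- the subcube
    set l : ℝ := min (ρ/(2*Real.sqrt n)) 1 with hl
    have hl0 : 0 < l := lt_min (by positivity) one_pos
    have hl1 : l ≤ 1 := min_le_right _ _
    have hlsq : Real.sqrt n * l ≤ ρ/2 := by
      calc Real.sqrt n * l ≤ Real.sqrt n * (ρ/(2*Real.sqrt n)) :=
            mul_le_mul_of_nonneg_left (min_le_left _ _) hsqn0.le
        _ = ρ/2 := by field_simp
    set q0 : Y := (WithLp.equiv 2 (Fin n → ℝ)).symm
      (fun i => min ((x₀ : Y) i) (1 - l)) with hq0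
    have hq0i : ∀ i, q0 i = min ((x₀ : Y) i) (1 - l) := fun i => rfl
    set ψ : Y → Y := fun y => (1/l) • (y - q0) with hψ
    set B' : Set Y := ψ '' (G km.1) with hB'
    -- B' is bounded
    obtain ⟨Rg, hRg⟩ := (hGb km.1).subset_closedBall 0
    have hB'b : IsBounded B' := by
      refine (Metric.isBounded_closedBall (x := (0:Y))
        (r := (1/l)*(Rg + ‖q0‖))).subset ?_
      rintro _ ⟨y, hy, rfl⟩
      rw [Metric.mem_closedBall, dist_zero_right, hψ]
      have hyRg : ‖y‖ ≤ Rg := by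
        have := hRg hy
        rwa [Metric.mem_closedBall, dist_zero_right] at this
      rw [norm_smul, Real.norm_eq_abs, abs_of_pos (by positivity)]
      have : ‖y - q0‖ ≤ Rg + ‖q0‖ := (norm_sub_le y q0).trans (by linarith)
      have h1l : (0:ℝ) ≤ 1/l := by positivity
      exact mul_le_mul_of_nonneg_left this h1l
    -- B' has the pattern property
    have hB'p : ∀ x : Y, (∀ i, x i ∈ Icc (0 : ℝ) 1) → ∃ r : Y, ∀ p ∈ P, x + p • r ∈ B' := by
      intro x hx
      set z : Y := q0 + l • x with hz
      have hzi : ∀ i, z i = q0 i + l * x i := fun i => by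
        rw [hz, PiLp.add_apply, PiLp.smul_apply, smul_eq_mul]
      have hq0nn : ∀ i, 0 ≤ q0 i := fun i => by
        rw [hq0i]
        exact le_min (x₀.2 i).1 (by linarith)
      have hzC : z ∈ C := by
        intro i
        rw [hzi]
        constructor
        · have := (hx i).1
          have := hq0nn i
          nlinarith
        · have h1 : q0 i ≤ 1 - l := by rw [hq0i]; exact min_le_right _ _
          have h2 : l * x i ≤ l := by nlinarith [(hx i).2, hl0]
          linarith
      have hzd : dist z (x₀ : Y) < ρ := by
        have hd : dist z (x₀ : Y) ≤ Real.sqrt n * l := by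
          refine euclid_dist_le hl0.le fun i => ?_
          rw [hzi]
          rcases le_or_gt ((x₀ : Y) i) (1 - l) with hcase | hcase
          · rw [hq0i, min_eq_left hcase, abs_le]
            constructor
            · nlinarith [(hx i).1, hl0]
            · nlinarith [(hx i).2, hl0]
          · rw [hq0i, min_eq_right hcase.le, abs_le]
            have hx₀le := (x₀.2 i).2
            constructor
            · nlinarith [(hx i).1, hl0]
            · nlinarith [(hx i).2, hl0]
        linarith [hρ]
      have hzE : z ∈ E km := by
        have hmem : (⟨z, hzC⟩ : ↥C) ∈ Metric.ball x₀ ρ := by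
          rw [Metric.mem_ball, Subtype.dist_eq]
          exact hzd
        exact hball hmem
      obtain ⟨r, hrM, hrG⟩ := hzE
      refine ⟨(1/l) • r, fun p hp => ?_⟩
      have key : x + p • ((1/l) • r) = ψ (z + p • r) := by
        show x + p • ((1/l) • r) = (1/l) • (z + p • r - q0)
        rw [hz]
        have h1 : q0 + l • x + p • r - q0 = l • x + p • r := by abel
        rw [h1]
        simp only [smul_add, smul_smul]
        rw [show (1:ℝ)/l * l = 1 by field_simp, one_smul, mul_comm p ((1:ℝ)/l)]
      rw [key]
      exact Set.mem_image_of_mem ψ (hrG p hp)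
    -- dimension bound for B'
    have hcovB' : ∀ᶠ ε in nhdsWithin (0:ℝ) (Ioi 0),
        (covNum B' ε).toNat ≤ 1 * (covNum (G km.1) (l*ε)).toNat := by
      filter_upwards [self_mem_nhdsWithin] with ε (hε : ε ∈ Ioi 0)
      rw [Set.mem_Ioi] at hε
      rw [one_mul]
      refine ENat.toNat_le_toNat (covNum_affine_le hl0 q0) ?_
      exact covNum_ne_top (isBounded_totallyBounded (hGb km.1)) (by positivity)
    have hB'dim : dimM B' ≤ dimM (G km.1) :=
      dimM_le_dimM 1 le_rfl hl0 (Uset_nonempty hn (hGb km.1)) hcovB'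
    have h1 : sInf SM ≤ dimM B' := csInf_le hSMbdd ⟨B', hB'b, hB'p, rfl⟩
    have h2 := hGdim km.1
    linarith [ha'lt]
  · -- easy direction : sInf SP ≤ sInf SM
    refine le_csInf hSMne ?_
    rintro a ⟨B, hBb, hBp, rfl⟩
    calc sInf SP ≤ dimP B := csInf_le hSPbdd ⟨B, hBp, rfl⟩
      _ ≤ dimM B := dimP_le_dimM hn hBb
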